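/- Fix n, d ∈ ℕ, 1 < p < ∞, T > 0, and suppose u_n converges weakly to u in L^p([0,T], ℝ^d). Let w : [0,T] → ℝ^{m×d} be a continuous matrix-valued function. Then the functions h_n(t) = ∫_0^t w(s)·(u_n(s) − u(s)) ds converge to the zero function uniformly on [0,T]. -/

import Mathlib

open MeasureTheory Set Filter Topology ENNReal

noncomputable section

variable {E F : Type*} [NormedAddCommGroup E] [NormedSpace ℝ E]
  [NormedAddCommGroup F] [NormedSpace ℝ F]

lemma aux_asm {T : ℝ} {w : ℝ → E →L[ℝ] F} (hw : ContinuousOn w (Icc 0 T))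
    {f : ℝ → E} (hf : AEStronglyMeasurable f (volume.restrict (Icc 0 T))) :
    AEStronglyMeasurable (fun s => w s (f s)) (volume.restrict (Icc (0:ℝ) T)) :=
  isBoundedBilinearMap_apply.continuous.comp_aestronglyMeasurable
    ((hw.aestronglyMeasurable_of_isCompact isCompact_Icc measurableSet_Icc).prodMk hf)

lemma aux_int {T Cw : ℝ} {w : ℝ → E →L[ℝ] F} (hw : ContinuousOn w (Icc 0 T))
    (hCw : ∀ s ∈ Icc (0:ℝ) T, ‖w s‖ ≤ Cw)
    {f : ℝ → E} (hf : Integrable f (volume.restrict (Icc 0 T))) :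
    Integrable (fun s => w s (f s)) (volume.restrict (Icc (0:ℝ) T)) := by
  refine (hf.norm.const_mul Cw).mono' (aux_asm hw hf.1) ?_
  filter_upwards [ae_restrict_mem measurableSet_Icc] with s hs
  exact ((w s).le_opNorm _).trans
    (mul_le_mul_of_nonneg_right (hCw s hs) (norm_nonneg _))

lemma aux_key {T Cw p : ℝ} (hp : 1 < p) {w : ℝ → E →L[ℝ] F}
    (hw : ContinuousOn w (Icc 0 T)) (hCw : ∀ s ∈ Icc (0:ℝ) T, ‖w s‖ ≤ Cw)
    (hCw0 : 0 ≤ Cw)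
    {f : ℝ → E} (hf : MemLp f (ENNReal.ofReal p) (volume.restrict (Icc 0 T)))
    {a b : ℝ} (ha : a ∈ Icc (0:ℝ) T) (hb : b ∈ Icc (0:ℝ) T) :
    ‖∫ s in a..b, w s (f s)‖ ≤
      Cw * (eLpNorm f (ENNReal.ofReal p) (volume.restrict (Icc 0 T))).toReal
        * |b - a| ^ (1 - 1/p) := by
  have hp0 : (0:ℝ) < p := lt_trans one_pos hp
  have hq1 : (1:ℝ≥0∞) ≤ ENNReal.ofReal p := by
    rw [← ENNReal.ofReal_one]
    exact ENNReal.ofReal_le_ofReal hp.le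
  have hIcc : Set.uIoc a b ⊆ Icc 0 T := fun x hx =>
    ⟨le_trans (le_min ha.1 hb.1) hx.1.le, le_trans hx.2 (max_le ha.2 hb.2)⟩
  have hle : volume.restrict (Set.uIoc a b) ≤ volume.restrict (Icc (0:ℝ) T) :=
    Measure.restrict_mono hIcc le_rfl
  have hfi : Integrable f (volume.restrict (Icc (0:ℝ) T)) := hf.integrable hq1
  have h1 : ‖∫ s in a..b, w s (f s)‖ ≤ ∫ s in Set.uIoc a b, ‖w s (f s)‖ :=
    intervalIntegral.norm_integral_le_integral_norm_uIoc
  have h2 : ∫ s in Set.uIoc a b, ‖w s (f s)‖ ≤ ∫ s in Set.uIoc a b, Cw * ‖f s‖ := by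
    refine integral_mono_of_nonneg (Eventually.of_forall fun s => norm_nonneg _)
      ((hfi.norm.const_mul Cw).mono_measure hle) ?_
    filter_upwards [ae_restrict_mem measurableSet_uIoc] with s hs
    exact ((w s).le_opNorm _).trans
      (mul_le_mul_of_nonneg_right (hCw s (hIcc hs)) (norm_nonneg _))
  have h3 : ∫ s in Set.uIoc a b, Cw * ‖f s‖ = Cw * ∫ s in Set.uIoc a b, ‖f s‖ :=
    integral_const_mul _ _
  have hfm' : AEStronglyMeasurable f (volume.restrict (Set.uIoc a b)) :=
    hf.1.mono_measure hle
  have h4 : ∫ s in Set.uIoc a b, ‖f s‖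
      = (eLpNorm f 1 (volume.restrict (Set.uIoc a b))).toReal := by
    rw [integral_norm_eq_lintegral_enorm hfm', eLpNorm_one_eq_lintegral_enorm]
  have h5 : eLpNorm f 1 (volume.restrict (Set.uIoc a b)) ≤
      eLpNorm f (ENNReal.ofReal p) (volume.restrict (Icc (0:ℝ) T))
        * (ENNReal.ofReal |b - a|) ^ (1 - 1/p) := by
    calc eLpNorm f 1 (volume.restrict (Set.uIoc a b))
        ≤ eLpNorm f (ENNReal.ofReal p) (volume.restrict (Set.uIoc a b))
          * (volume.restrict (Set.uIoc a b)) Set.univ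
            ^ (1/(1:ℝ≥0∞).toReal - 1/(ENNReal.ofReal p).toReal) :=
          eLpNorm_le_eLpNorm_mul_rpow_measure_univ hq1 hfm'
      _ ≤ eLpNorm f (ENNReal.ofReal p) (volume.restrict (Icc (0:ℝ) T))
          * (ENNReal.ofReal |b - a|) ^ (1 - 1/p) := by
          have hμ : (volume.restrict (Set.uIoc a b)) Set.univ
              = ENNReal.ofReal |b - a| := by
            rw [Measure.restrict_apply_univ, Set.uIoc, Real.volume_Ioc]
            congr 1
            rcases le_total a b with h | h
            · rw [min_eq_left h, max_eq_right h, abs_of_nonneg (by linarith)]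
            · rw [min_eq_right h, max_eq_left h, abs_of_nonpos (by linarith)]
              ring
          have hexp : 1/(1:ℝ≥0∞).toReal - 1/(ENNReal.ofReal p).toReal = 1 - 1/p := by
            rw [ENNReal.toReal_one, ENNReal.toReal_ofReal hp0.le]
            norm_num
          rw [hμ, hexp]
          exact mul_le_mul_left (eLpNorm_mono_measure _ hle) _
  have hfin : eLpNorm f (ENNReal.ofReal p) (volume.restrict (Icc (0:ℝ) T)) ≠ ⊤ :=
    hf.2.ne
  have h6 : (eLpNorm f 1 (volume.restrict (Set.uIoc a b))).toReal ≤
      (eLpNorm f (ENNReal.ofReal p) (volume.restrict (Icc (0:ℝ) T))).toReal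
        * |b - a| ^ (1 - 1/p) := by
    have := ENNReal.toReal_mono ?_ h5
    · rwa [ENNReal.toReal_mul, ← ENNReal.toReal_rpow,
        ENNReal.toReal_ofReal (abs_nonneg _)] at this
    · exact ENNReal.mul_ne_top hfin (by
        exact ENNReal.rpow_ne_top_of_nonneg (by rw [sub_nonneg, div_le_one hp0]; exact hp.le) ENNReal.ofReal_ne_top)
  calc ‖∫ s in a..b, w s (f s)‖ ≤ ∫ s in Set.uIoc a b, ‖w s (f s)‖ := h1
    _ ≤ ∫ s in Set.uIoc a b, Cw * ‖f s‖ := h2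
    _ = Cw * ∫ s in Set.uIoc a b, ‖f s‖ := h3
    _ ≤ Cw * ((eLpNorm f (ENNReal.ofReal p) (volume.restrict (Icc (0:ℝ) T))).toReal
        * |b - a| ^ (1 - 1/p)) := by
        rw [h4]; exact mul_le_mul_of_nonneg_left h6 hCw0
    _ = _ := by ring

lemma aux_ii {T Cw : ℝ} {w : ℝ → E →L[ℝ] F} (hw : ContinuousOn w (Icc 0 T))
    (hCw : ∀ s ∈ Icc (0:ℝ) T, ‖w s‖ ≤ Cw)
    {f : ℝ → E} (hf : Integrable f (volume.restrict (Icc 0 T)))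
    {a b : ℝ} (ha : a ∈ Icc (0:ℝ) T) (hb : b ∈ Icc (0:ℝ) T) :
    IntervalIntegrable (fun s => w s (f s)) volume a b := by
  rw [intervalIntegrable_iff]
  have hIcc : Set.uIoc a b ⊆ Icc 0 T := fun x hx =>
    ⟨le_trans (le_min ha.1 hb.1) hx.1.le, le_trans hx.2 (max_le ha.2 hb.2)⟩
  exact (aux_int hw hCw hf).mono_measure (Measure.restrict_mono hIcc le_rfl)

lemma aux_clm {T Cw p : ℝ} (hp : 1 < p) [Fact (1 ≤ ENNReal.ofReal p)]
    {w : ℝ → E →L[ℝ] F} (hw : ContinuousOn w (Icc 0 T))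
    (hCw : ∀ s ∈ Icc (0:ℝ) T, ‖w s‖ ≤ Cw) (hCw0 : 0 ≤ Cw)
    {t : ℝ} (ht : t ∈ Icc (0:ℝ) T) :
    ∃ Φ : Lp E (ENNReal.ofReal p) (volume.restrict (Icc (0:ℝ) T)) →L[ℝ] F,
      ∀ f : Lp E (ENNReal.ofReal p) (volume.restrict (Icc (0:ℝ) T)),
        Φ f = ∫ s in (0:ℝ)..t, w s (f s) := by
  have hp0 : (0:ℝ) < p := lt_trans one_pos hp
  have hq1 : (1:ℝ≥0∞) ≤ ENNReal.ofReal p := by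
    rw [← ENNReal.ofReal_one]; exact ENNReal.ofReal_le_ofReal hp.le
  have h0T : (0:ℝ) ∈ Icc (0:ℝ) T := ⟨le_refl _, ht.1.trans ht.2⟩
  have key : ∀ f : Lp E (ENNReal.ofReal p) (volume.restrict (Icc (0:ℝ) T)),
      ‖∫ s in (0:ℝ)..t, w s (f s)‖ ≤ (Cw * T ^ (1 - 1/p)) * ‖f‖ := by
    intro f
    have := aux_key hp hw hCw hCw0 (Lp.memLp f) h0T ht
    rw [← Lp.norm_def] at this
    refine this.trans ?_
    rw [sub_zero]
    calc Cw * ‖f‖ * |t| ^ (1 - 1/p) ≤ Cw * ‖f‖ * T ^ (1 - 1/p) := by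
          refine mul_le_mul_of_nonneg_left ?_ (by positivity)
          refine Real.rpow_le_rpow (abs_nonneg _) ?_
            (by rw [sub_nonneg, div_le_one hp0]; exact hp.le)
          rw [abs_of_nonneg ht.1]; exact ht.2
      _ = (Cw * T ^ (1 - 1/p)) * ‖f‖ := by ring
  have congr_ae : ∀ (f g : ℝ → E),
      f =ᵐ[volume.restrict (Icc (0:ℝ) T)] g →
      (∫ s in (0:ℝ)..t, w s (f s)) = ∫ s in (0:ℝ)..t, w s (g s) := by
    intro f g hfg
    refine intervalIntegral.integral_congr_ae ?_
    have hIcc : Set.uIoc (0:ℝ) t ⊆ Icc 0 T := fun x hx =>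
      ⟨le_trans (le_min h0T.1 ht.1) hx.1.le, le_trans hx.2 (max_le h0T.2 ht.2)⟩
    filter_upwards [(ae_restrict_iff' measurableSet_Icc).mp hfg] with s hs hsI
    rw [hs (hIcc hsI)]
  refine ⟨LinearMap.mkContinuous
    { toFun := fun f => ∫ s in (0:ℝ)..t, w s (f s),
      map_add' := ?_, map_smul' := ?_ } (Cw * T ^ (1 - 1/p)) key, fun f => rfl⟩
  · intro f g
    have h1 := congr_ae _ _ (Lp.coeFn_add f g)
    rw [h1]
    have h2 : (∫ s in (0:ℝ)..t, w s ((⇑f + ⇑g) s))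
        = ∫ s in (0:ℝ)..t, (w s (f s) + w s (g s)) := by
      refine intervalIntegral.integral_congr (fun s _ => ?_)
      simp
    rw [h2]
    exact intervalIntegral.integral_add
      (aux_ii hw hCw ((Lp.memLp f).integrable hq1) h0T ht)
      (aux_ii hw hCw ((Lp.memLp g).integrable hq1) h0T ht)
  · intro c f
    have h1 := congr_ae _ _ (Lp.coeFn_smul c f)
    rw [h1]
    have h2 : (∫ s in (0:ℝ)..t, w s ((c • ⇑f) s))
        = ∫ s in (0:ℝ)..t, c • (w s (f s)) := by
      refine intervalIntegral.integral_congr (fun s _ => ?_)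
      simp
    rw [h2, intervalIntegral.integral_smul]
    rfl

lemma aux_congr {T : ℝ} (w : ℝ → E →L[ℝ] F) {t : ℝ} (ht : t ∈ Icc (0:ℝ) T)
    {f g : ℝ → E} (hfg : f =ᵐ[volume.restrict (Icc (0:ℝ) T)] g) :
    (∫ s in (0:ℝ)..t, w s (f s)) = ∫ s in (0:ℝ)..t, w s (g s) := by
  have h0T : (0:ℝ) ∈ Icc (0:ℝ) T := ⟨le_refl _, ht.1.trans ht.2⟩
  refine intervalIntegral.integral_congr_ae ?_
  have hIcc : Set.uIoc (0:ℝ) t ⊆ Icc 0 T := fun x hx =>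
    ⟨le_trans (le_min h0T.1 ht.1) hx.1.le, le_trans hx.2 (max_le h0T.2 ht.2)⟩
  filter_upwards [(ae_restrict_iff' measurableSet_Icc).mp hfg] with s hs hsI
  rw [hs (hIcc hsI)]

/-- if `u_k ⇀ u` weakly in `L^p([0,T],ℝ^d)` and `w : [0,T] → ℝ^{m×d}`
is continuous (viewed as a continuous family of linear maps `ℝ^d → ℝ^m`), then
`h_k(t) = ∫₀ᵗ w(s)(u_k(s) − u(s)) ds` converges to `0` uniformly on `[0,T]`. -/
theorem stmt11 (m d : ℕ) (p : ℝ) (hp : 1 < p) [Fact (1 ≤ ENNReal.ofReal p)]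
    (T : ℝ) (hT : 0 < T)
    (u : ℕ → Lp (EuclideanSpace ℝ (Fin d)) (ENNReal.ofReal p)
      (volume.restrict (Set.Icc (0:ℝ) T)))
    (ulim : Lp (EuclideanSpace ℝ (Fin d)) (ENNReal.ofReal p)
      (volume.restrict (Set.Icc (0:ℝ) T)))
    (hweak : ∀ φ : Lp (EuclideanSpace ℝ (Fin d)) (ENNReal.ofReal p)
        (volume.restrict (Set.Icc (0:ℝ) T)) →L[ℝ] ℝ,
      Tendsto (fun k => φ (u k)) atTop (𝓝 (φ ulim)))
    (w : ℝ → (EuclideanSpace ℝ (Fin d) →L[ℝ] EuclideanSpace ℝ (Fin m)))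
    (hw : ContinuousOn w (Set.Icc 0 T)) :
    TendstoUniformlyOn
      (fun k t => ∫ s in (0:ℝ)..t, w s (u k s - ulim s))
      (fun _ => 0) atTop (Set.Icc 0 T) := by
  have hp0 : (0:ℝ) < p := lt_trans one_pos hp
  have hα : (0:ℝ) < 1 - 1/p := by
    rw [sub_pos, div_lt_one hp0]; exact hp
  have hq1 : (1:ℝ≥0∞) ≤ ENNReal.ofReal p := by
    rw [← ENNReal.ofReal_one]; exact ENNReal.ofReal_le_ofReal hp.le
  -- bound on w
  obtain ⟨Cw0, hCw0⟩ := isCompact_Icc.exists_bound_of_continuousOn hw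
  set Cw : ℝ := max Cw0 0 with hCwdef
  have hCw : ∀ s ∈ Icc (0:ℝ) T, ‖w s‖ ≤ Cw := fun s hs =>
    (hCw0 s hs).trans (le_max_left _ _)
  have hCwnn : (0:ℝ) ≤ Cw := le_max_right _ _
  -- the differences
  set v := fun k => u k - ulim with hv
  have hvae : ∀ k, (⇑(v k) : ℝ → EuclideanSpace ℝ (Fin d))
      =ᵐ[volume.restrict (Icc (0:ℝ) T)] fun s => u k s - ulim s :=
    fun k => Lp.coeFn_sub (u k) ulim
  have hgmem : ∀ k, MemLp (fun s => u k s - ulim s) (ENNReal.ofReal p)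
      (volume.restrict (Icc (0:ℝ) T)) :=
    fun k => (Lp.memLp (u k)).sub (Lp.memLp ulim)
  have hgnorm : ∀ k, (eLpNorm (fun s => u k s - ulim s) (ENNReal.ofReal p)
      (volume.restrict (Icc (0:ℝ) T))).toReal = ‖v k‖ := by
    intro k
    rw [Lp.norm_def]
    congr 1
    exact eLpNorm_congr_ae (hvae k).symm
  -- weak convergence of differences to 0
  have hweak0 : ∀ φ : Lp (EuclideanSpace ℝ (Fin d)) (ENNReal.ofReal p)
      (volume.restrict (Set.Icc (0:ℝ) T)) →L[ℝ] ℝ, Tendsto (fun k => φ (v k)) atTop (𝓝 0) := by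
    intro φ
    have h := (hweak φ).sub (tendsto_const_nhds (x := φ ulim))
    simpa [hv, map_sub, sub_self] using h
  -- uniform bound via Banach-Steinhaus
  obtain ⟨M, hMnn, hM⟩ : ∃ M, 0 ≤ M ∧ ∀ k, ‖v k‖ ≤ M := by
    have hpb : ∀ φ : StrongDual ℝ _, ∃ C, ∀ k,
        ‖(NormedSpace.inclusionInDoubleDual ℝ _ (v k)) φ‖ ≤ C := by
      intro φ
      obtain ⟨C, hC⟩ := (hweak0 φ).norm.bddAbove_range
      exact ⟨C, fun k => hC (Set.mem_range_self k)⟩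
    obtain ⟨C', hC'⟩ := banach_steinhaus hpb
    refine ⟨max C' 0, le_max_right _ _, fun k => ?_⟩
    have : ‖NormedSpace.inclusionInDoubleDual ℝ _ (v k)‖ = ‖v k‖ :=
      (NormedSpace.inclusionInDoubleDualLi ℝ).norm_map (v k)
    rw [← this]
    exact (hC' k).trans (le_max_left _ _)
  -- the key uniform estimate
  have hKey : ∀ (k : ℕ) (a b : ℝ), a ∈ Icc (0:ℝ) T → b ∈ Icc (0:ℝ) T →
      ‖∫ s in a..b, w s (u k s - ulim s)‖ ≤ (Cw * M) * |b - a| ^ (1 - 1/p) := by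
    intro k a b ha hb
    refine (aux_key hp hw hCw hCwnn (hgmem k) ha hb).trans ?_
    rw [hgnorm k]
    have h1 : Cw * ‖v k‖ ≤ Cw * M := mul_le_mul_of_nonneg_left (hM k) hCwnn
    exact mul_le_mul_of_nonneg_right h1 (by positivity)
  -- pointwise convergence
  have hpt : ∀ t ∈ Icc (0:ℝ) T,
      Tendsto (fun k => ∫ s in (0:ℝ)..t, w s (u k s - ulim s)) atTop
        (𝓝 (0 : EuclideanSpace ℝ (Fin m))) := by
    intro t ht
    obtain ⟨Φ, hΦ⟩ := aux_clm hp hw hCw hCwnn ht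
    have hFk : ∀ k, (∫ s in (0:ℝ)..t, w s (u k s - ulim s)) = Φ (v k) := by
      intro k
      rw [hΦ (v k)]
      exact aux_congr w ht (hvae k).symm
    simp only [hFk]
    have hpi : Tendsto (fun k => (fun i => Φ (v k) i : Fin m → ℝ)) atTop
        (𝓝 0) := by
      rw [tendsto_pi_nhds]
      intro i
      have := hweak0 ((EuclideanSpace.proj i).comp Φ)
      simpa using this
    have hcont := ((PiLp.continuousLinearEquiv 2 ℝ
        (fun _ : Fin m => ℝ)).symm.continuous.tendsto 0).comp hpi
    simp only [map_zero] at hcont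
    exact hcont
  -- equicontinuity
  have hequi : EquicontinuousOn
      (fun k t => ∫ s in (0:ℝ)..t, w s (u k s - ulim s)) (Icc (0:ℝ) T) := by
    rw [← equicontinuous_restrict_iff]
    refine Metric.equicontinuous_of_continuity_modulus
      (fun r => (Cw * M) * r ^ (1 - 1/p)) ?_ _ ?_
    · have h1 : Tendsto (fun r : ℝ => r ^ (1 - 1/p)) (𝓝 0) (𝓝 (0:ℝ)) := by
        have := (Real.continuousAt_rpow_const 0 (1 - 1/p) (Or.inr hα.le)).tendsto
        rwa [Real.zero_rpow hα.ne'] at this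
      have := h1.const_mul (Cw * M)
      simpa using this
    · rintro ⟨x, hx⟩ ⟨y, hy⟩ k
      simp only [Function.comp_apply, Set.restrict_apply]
      rw [dist_eq_norm]
      have hsub : (∫ s in (0:ℝ)..x, w s (u k s - ulim s))
          - (∫ s in (0:ℝ)..y, w s (u k s - ulim s))
          = ∫ s in y..x, w s (u k s - ulim s) := by
        have h0T : (0:ℝ) ∈ Icc (0:ℝ) T := ⟨le_refl _, hT.le⟩
        exact intervalIntegral.integral_interval_sub_left
          (aux_ii hw hCw ((hgmem k).integrable hq1) h0T hx)
          (aux_ii hw hCw ((hgmem k).integrable hq1) h0T hy)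
      rw [hsub]
      have := hKey k y x hy hx
      rwa [Subtype.dist_eq, Real.dist_eq]
  -- conclusion via Ascoli-type result
  have hcomp : ∀ K ∈ ({Icc (0:ℝ) T} : Set (Set ℝ)), IsCompact K := by
    rintro K rfl
    exact isCompact_Icc
  have hequi' : ∀ K ∈ ({Icc (0:ℝ) T} : Set (Set ℝ)), EquicontinuousOn
      (fun k t => ∫ s in (0:ℝ)..t, w s (u k s - ulim s)) K := by
    rintro K rfl
    exact hequi
  have hpt' : Tendsto ((⋃₀ ({Icc (0:ℝ) T} : Set (Set ℝ))).restrict ∘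
      (fun k t => ∫ s in (0:ℝ)..t, w s (u k s - ulim s))) atTop
      (𝓝 <| (⋃₀ ({Icc (0:ℝ) T} : Set (Set ℝ))).restrict (fun _ => (0 : EuclideanSpace ℝ (Fin m)))) := by
    rw [tendsto_pi_nhds]
    rintro ⟨x, hx⟩
    rw [Set.sUnion_singleton] at hx
    exact hpt x hx
  have hmain := (EquicontinuousOn.tendsto_uniformOnFun_iff_pi' hcomp hequi'
    atTop (fun _ => (0 : EuclideanSpace ℝ (Fin m)))).mpr hpt'
  exact UniformOnFun.tendsto_iff_tendstoUniformlyOn.mp hmain _ rfl
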